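/- Let n ≥ 2 be an integer and let X = (ℝ ∪ {∞}) × S¹ be the product of the one-point compactification of ℝ and the circle ℝ/ℤ. Let k be a homeomorphism of S¹ and let f, h be homeomorphisms of X satisfying f(x, θ) = (x + 1, θ) and h(x, θ) = (n·x, k(θ)) for all x ∈ ℝ and θ ∈ S¹ (so f(∞, θ) = (∞, θ) and h(∞, θ) = (∞, k(θ))). Then h ∘ f ∘ h⁻¹ = fⁿ, and the group homomorphism from BS(1,n) = ⟨a, b | a b a⁻¹ = bⁿ⟩ to the homeomorphism group of X sending a ↦ h and b ↦ f is injective; in particular the subgroup of Homeo(X) generated by f and h is isomorphic to BS(1,n). -/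

import Mathlib

open OnePoint

/-- The group of self-homeomorphisms of a topological space, under composition:
`(a * b) x = a (b x)`. -/
instance homeomorphGroup {X : Type*} [TopologicalSpace X] : Group (X ≃ₜ X) where
  mul a b := b.trans a
  one := Homeomorph.refl X
  inv := Homeomorph.symm
  mul_assoc _ _ _ := rfl
  one_mul _ := rfl
  mul_one _ := rfl
  inv_mul_cancel a := Homeomorph.ext fun x => a.symm_apply_apply x

/-- The relator set of the Baumslag–Solitar group `BS(1,n) = ⟨a, b | a b a⁻¹ = bⁿ⟩`,
with `a` the generator `0` and `b` the generator `1`. -/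
def bsRels (n : ℕ) : Set (FreeGroup (Fin 2)) :=
  {FreeGroup.of 0 * FreeGroup.of 1 * (FreeGroup.of 0)⁻¹ * (FreeGroup.of 1 ^ n)⁻¹}

/-- The space `(ℝ ∪ {∞}) × S¹`: the product of the one-point compactification of `ℝ`
and the circle `ℝ/ℤ`. -/
abbrev CylSpace : Type := OnePoint ℝ × AddCircle (1 : ℝ)

private lemma bs_rel (n : ℕ) :
    (PresentedGroup.of 0 : PresentedGroup (bsRels n)) * PresentedGroup.of 1 *
      (PresentedGroup.of 0)⁻¹ = (PresentedGroup.of 1) ^ n := by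
  have h1 : PresentedGroup.mk (bsRels n)
      (FreeGroup.of 0 * FreeGroup.of 1 * (FreeGroup.of 0)⁻¹ * (FreeGroup.of 1 ^ n)⁻¹) = 1 :=
    (QuotientGroup.eq_one_iff _).mpr (Subgroup.subset_normalClosure rfl)
  simp only [map_mul, map_inv, map_pow] at h1
  exact mul_inv_eq_one.mp h1

private lemma bs_conj_zpow (n : ℕ) (m : ℤ) :
    (PresentedGroup.of 0 : PresentedGroup (bsRels n)) * (PresentedGroup.of 1) ^ m *
      (PresentedGroup.of 0)⁻¹ = (PresentedGroup.of 1) ^ ((n : ℤ) * m) := by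
  have h1 : (MulAut.conj (PresentedGroup.of 0 : PresentedGroup (bsRels n)))
      ((PresentedGroup.of 1) ^ m) = ((MulAut.conj (PresentedGroup.of 0 :
      PresentedGroup (bsRels n))) (PresentedGroup.of 1)) ^ m := map_zpow _ _ _
  simp only [MulAut.conj_apply] at h1
  rw [h1, bs_rel n, ← zpow_natCast, ← zpow_mul]

private lemma bs_conj_pow (n : ℕ) (r : ℕ) (m : ℤ) :
    (PresentedGroup.of 0 : PresentedGroup (bsRels n)) ^ r * (PresentedGroup.of 1) ^ m *
      ((PresentedGroup.of 0) ^ r)⁻¹ = (PresentedGroup.of 1) ^ ((n : ℤ) ^ r * m) := by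
  induction r generalizing m with
  | zero => simp
  | succ r ih =>
    have : (PresentedGroup.of 0 : PresentedGroup (bsRels n)) ^ (r + 1) *
        (PresentedGroup.of 1) ^ m * ((PresentedGroup.of 0) ^ (r + 1))⁻¹ =
        (PresentedGroup.of 0) ^ r * ((PresentedGroup.of 0) * (PresentedGroup.of 1) ^ m *
          (PresentedGroup.of 0)⁻¹) * ((PresentedGroup.of 0) ^ r)⁻¹ := by
      rw [pow_succ]; group
    rw [this, bs_conj_zpow, ih ((n : ℤ) * m)]
    congr 1
    ring

private lemma bs_normal_form (n : ℕ) (w : PresentedGroup (bsRels n)) :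
    ∃ (p q : ℕ) (m : ℤ),
      w = ((PresentedGroup.of 0 : PresentedGroup (bsRels n)) ^ p)⁻¹ *
        (PresentedGroup.of 1) ^ m * (PresentedGroup.of 0) ^ q := by
  induction w with
  | H z =>
    induction z using FreeGroup.induction_on with
    | C1 => exact ⟨0, 0, 0, by simp⟩
    | of i =>
      fin_cases i
      · exact ⟨0, 1, 0, by simp; rfl⟩
      · exact ⟨0, 0, 1, by simp; rfl⟩
    | inv_of i _ =>
      fin_cases i
      · exact ⟨1, 0, 0, by simp; rfl⟩
      · exact ⟨0, 0, -1, by simp; rfl⟩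
    | mul x y hx hy =>
      obtain ⟨p, q, m, hx⟩ := hx
      obtain ⟨p', q', m', hy⟩ := hy
      rw [map_mul, hx, hy]
      set a : PresentedGroup (bsRels n) := PresentedGroup.of 0 with ha
      set b : PresentedGroup (bsRels n) := PresentedGroup.of 1 with hb
      rcases le_or_gt p' q with hle | hlt
      · refine ⟨p, q - p' + q', m + (n : ℤ) ^ (q - p') * m', ?_⟩
        have hq : a ^ q = a ^ (q - p') * a ^ p' := by rw [← pow_add]; congr 1; omega
        have hc := bs_conj_pow n (q - p') m'
        rw [← ha, ← hb] at hc
        calc (a ^ p)⁻¹ * b ^ m * a ^ q * ((a ^ p')⁻¹ * b ^ m' * a ^ q')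
            = (a ^ p)⁻¹ * b ^ m * (a ^ (q - p') * b ^ m' * (a ^ (q - p'))⁻¹) *
              (a ^ (q - p') * a ^ q') := by rw [hq]; group
          _ = (a ^ p)⁻¹ * (b ^ m * b ^ ((n : ℤ) ^ (q - p') * m')) * a ^ (q - p' + q') := by
              rw [hc, pow_add]; group
          _ = (a ^ p)⁻¹ * b ^ (m + (n : ℤ) ^ (q - p') * m') * a ^ (q - p' + q') := by
              rw [zpow_add]
      · refine ⟨p + (p' - q), q', (n : ℤ) ^ (p' - q) * m + m', ?_⟩
        have hq : a ^ p' = a ^ (p' - q) * a ^ q := by rw [← pow_add]; congr 1; omega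
        have hc := bs_conj_pow n (p' - q) m
        rw [← ha, ← hb] at hc
        calc (a ^ p)⁻¹ * b ^ m * a ^ q * ((a ^ p')⁻¹ * b ^ m' * a ^ q')
            = (a ^ p)⁻¹ * (a ^ (p' - q))⁻¹ *
              (a ^ (p' - q) * b ^ m * (a ^ (p' - q))⁻¹) * b ^ m' * a ^ q' := by
              rw [hq]; group
          _ = (a ^ (p + (p' - q)))⁻¹ * (b ^ ((n : ℤ) ^ (p' - q) * m) * b ^ m') * a ^ q' := by
              rw [hc, pow_add]; group
          _ = (a ^ (p + (p' - q)))⁻¹ * b ^ ((n : ℤ) ^ (p' - q) * m + m') * a ^ q' := by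
              rw [zpow_add]

/-- for `f(x,θ) = (x+1,θ)` and `h(x,θ) = (nx, k(θ))` on
`(ℝ ∪ {∞}) × S¹`, we have `h ∘ f ∘ h⁻¹ = fⁿ` and the homomorphism from `BS(1,n)`
sending `a ↦ h`, `b ↦ f` is injective with range the subgroup generated by `f` and
`h`; in particular that subgroup is isomorphic to `BS(1,n)`. -/
theorem bs_product_action_is_faithful
    (n : ℕ) (hn : 2 ≤ n)
    (k : AddCircle (1 : ℝ) ≃ₜ AddCircle (1 : ℝ))
    (f h : CylSpace ≃ₜ CylSpace)
    (hf : ∀ (x : ℝ) (θ : AddCircle (1 : ℝ)), f (↑x, θ) = (↑(x + 1), θ))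
    (hfinf : ∀ θ : AddCircle (1 : ℝ), f (∞, θ) = (∞, θ))
    (hh : ∀ (x : ℝ) (θ : AddCircle (1 : ℝ)), h (↑x, θ) = (↑((n : ℝ) * x), k θ))
    (hhinf : ∀ θ : AddCircle (1 : ℝ), h (∞, θ) = (∞, k θ)) :
    (∀ p : CylSpace, h (f (h.symm p)) = (⇑f)^[n] p) ∧
    ∃ φ : PresentedGroup (bsRels n) →* (CylSpace ≃ₜ CylSpace),
      φ (PresentedGroup.of 0) = h ∧ φ (PresentedGroup.of 1) = f ∧
      Function.Injective φ ∧
      φ.range = Subgroup.closure ({f, h} : Set (CylSpace ≃ₜ CylSpace)) := by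
  have hn0 : (n : ℝ) ≠ 0 := by
    have : (0 : ℝ) < n := by exact_mod_cast Nat.lt_of_lt_of_le Nat.zero_lt_two hn
    exact this.ne'
  -- inverses of f and h on points
  have hsymm : ∀ (x : ℝ) (θ : AddCircle (1 : ℝ)),
      h.symm (↑x, θ) = (↑(x / n), k.symm θ) := by
    intro x θ
    have : h (↑(x / n), k.symm θ) = (↑x, θ) := by
      rw [hh]
      rw [mul_div_cancel₀ _ hn0, k.apply_symm_apply]
    rw [← this, Homeomorph.symm_apply_apply]
  have hsymminf : ∀ θ : AddCircle (1 : ℝ), h.symm (∞, θ) = (∞, k.symm θ) := by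
    intro θ
    have : h (∞, k.symm θ) = (∞, θ) := by rw [hhinf, k.apply_symm_apply]
    rw [← this, Homeomorph.symm_apply_apply]
  have fsymm : ∀ (x : ℝ) (θ : AddCircle (1 : ℝ)), f.symm (↑x, θ) = (↑(x - 1), θ) := by
    intro x θ
    have : f (↑(x - 1), θ) = (↑x, θ) := by rw [hf]; norm_num
    rw [← this, Homeomorph.symm_apply_apply]
  have fsymminf : ∀ θ : AddCircle (1 : ℝ), f.symm (∞, θ) = (∞, θ) := by
    intro θ
    have : f (∞, θ) = (∞, θ) := hfinf θ
    rw [← this, Homeomorph.symm_apply_apply, this]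
  -- iterates of f
  have hiter : ∀ (m : ℕ) (x : ℝ) (θ : AddCircle (1 : ℝ)),
      (⇑f)^[m] (↑x, θ) = (↑(x + m), θ) := by
    intro m
    induction m with
    | zero => intro x θ; simp
    | succ m ih =>
      intro x θ
      rw [Function.iterate_succ_apply', ih, hf]
      push_cast
      ring_nf
  have hiterinf : ∀ (m : ℕ) (θ : AddCircle (1 : ℝ)), (⇑f)^[m] (∞, θ) = (∞, θ) := by
    intro m
    induction m with
    | zero => intro θ; simp
    | succ m ih => intro θ; rw [Function.iterate_succ_apply', ih, hfinf]
  -- part 1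
  have part1 : ∀ p : CylSpace, h (f (h.symm p)) = (⇑f)^[n] p := by
    rintro ⟨u, θ⟩
    induction u using OnePoint.rec with
    | infty =>
      rw [hsymminf, hfinf, hhinf, k.apply_symm_apply, hiterinf]
    | coe x =>
      rw [hsymm, hf, hh, k.apply_symm_apply, hiter]
      congr 2
      field_simp
  -- group structure lemmas
  have hmul : ∀ (a b : CylSpace ≃ₜ CylSpace) (p : CylSpace), (a * b) p = a (b p) :=
    fun _ _ _ => rfl
  have hone : ∀ p : CylSpace, (1 : CylSpace ≃ₜ CylSpace) p = p := fun _ => rfl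
  have hinvd : ∀ a : CylSpace ≃ₜ CylSpace, (a⁻¹ : CylSpace ≃ₜ CylSpace) = a.symm :=
    fun _ => rfl
  have hpow : ∀ (m : ℕ) (p : CylSpace), (f ^ m) p = (⇑f)^[m] p := by
    intro m
    induction m with
    | zero => intro p; rw [pow_zero, hone, Function.iterate_zero_apply]
    | succ m ih =>
      intro p
      rw [pow_succ, hmul, ih, ← Function.iterate_succ_apply]
  -- the homomorphism φ
  have hrelf : ∀ r ∈ bsRels n, FreeGroup.lift ![h, f] r = 1 := by
    intro r hr
    rw [bsRels, Set.mem_singleton_iff] at hr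
    subst hr
    have key : h * f * h⁻¹ = f ^ n := by
      apply Homeomorph.ext
      intro p
      rw [hmul, hmul, hinvd]
      exact (part1 p).trans (hpow n p).symm
    simp only [map_mul, map_inv, map_pow, FreeGroup.lift_apply_of]
    simp only [Matrix.cons_val_zero, Matrix.cons_val_one, Matrix.head_cons]
    rw [key, mul_inv_cancel]
  set φ : PresentedGroup (bsRels n) →* (CylSpace ≃ₜ CylSpace) :=
    PresentedGroup.toGroup hrelf with hφdef
  have hφ0 : φ (PresentedGroup.of 0) = h := by
    rw [hφdef, PresentedGroup.toGroup.of]; rfl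
  have hφ1 : φ (PresentedGroup.of 1) = f := by
    rw [hφdef, PresentedGroup.toGroup.of]; rfl
  -- the affine model ψ on ℝ
  set A : Equiv.Perm ℝ :=
    { toFun := fun x => n * x
      invFun := fun x => x / n
      left_inv := fun x => by field_simp
      right_inv := fun x => by field_simp } with hA
  set B : Equiv.Perm ℝ := Equiv.addRight (1 : ℝ) with hB
  have hBpow : ∀ (m : ℕ) (x : ℝ), (B ^ m) x = x + m := by
    intro m
    induction m with
    | zero => intro x; simp
    | succ m ih =>
      intro x
      rw [pow_succ, Equiv.Perm.mul_apply, ih]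
      show x + 1 + m = x + (m + 1 : ℕ)
      push_cast; ring
  have hBzpow : ∀ (m : ℤ) (x : ℝ), (B ^ m) x = x + m := by
    intro m x
    obtain ⟨m', hm'⟩ := Int.eq_nat_or_neg m
    rcases hm' with rfl | rfl
    · rw [zpow_natCast, hBpow]; push_cast; ring
    · rw [zpow_neg, zpow_natCast]
      have : (B ^ m') ((B ^ m')⁻¹ x) = x := Equiv.apply_symm_apply _ _
      rw [hBpow] at this
      have h2 : ((B ^ m')⁻¹ : Equiv.Perm ℝ) x = x - m' := by linarith
      rw [h2]; push_cast; ring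
  have hApow : ∀ (m : ℕ) (x : ℝ), (A ^ m) x = n ^ m * x := by
    intro m
    induction m with
    | zero => intro x; simp
    | succ m ih =>
      intro x
      rw [pow_succ', Equiv.Perm.mul_apply, ih]
      show (n : ℝ) * ((n : ℝ) ^ m * x) = (n : ℝ) ^ (m + 1) * x
      rw [pow_succ]; ring
  have hAinvpow : ∀ (m : ℕ) (x : ℝ), ((A ^ m)⁻¹ : Equiv.Perm ℝ) x = x / n ^ m := by
    intro m x
    have h1 : (A ^ m) (((A ^ m)⁻¹ : Equiv.Perm ℝ) x) = x := Equiv.apply_symm_apply _ _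
    rw [hApow] at h1
    have hn0' : ((n : ℝ)) ^ m ≠ 0 := pow_ne_zero _ hn0
    rw [eq_div_iff hn0']
    linear_combination h1
  have hrelψ : ∀ r ∈ bsRels n, FreeGroup.lift ![A, B] r = 1 := by
    intro r hr
    rw [bsRels, Set.mem_singleton_iff] at hr
    subst hr
    have key : A * B * A⁻¹ = B ^ n := by
      apply Equiv.ext
      intro x
      rw [Equiv.Perm.mul_apply, Equiv.Perm.mul_apply, hBpow]
      show (n : ℝ) * (x / n + 1) = x + n
      field_simp
    simp only [map_mul, map_inv, map_pow, FreeGroup.lift_apply_of]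
    simp only [Matrix.cons_val_zero, Matrix.cons_val_one, Matrix.head_cons]
    rw [key, mul_inv_cancel]
  set ψ : PresentedGroup (bsRels n) →* Equiv.Perm ℝ :=
    PresentedGroup.toGroup hrelψ with hψdef
  have hψ0 : ψ (PresentedGroup.of 0) = A := by
    rw [hψdef, PresentedGroup.toGroup.of]; rfl
  have hψ1 : ψ (PresentedGroup.of 1) = B := by
    rw [hψdef, PresentedGroup.toGroup.of]; rfl
  -- compatibility of φ and ψ
  have compat : ∀ w : PresentedGroup (bsRels n),
      (∀ (x : ℝ) (θ : AddCircle (1 : ℝ)), ((φ w) (↑x, θ)).1 = ↑(ψ w x)) ∧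
      (∀ θ : AddCircle (1 : ℝ), ((φ w) (∞, θ)).1 = ∞) := by
    have hφmk : ∀ z : FreeGroup (Fin 2),
        φ (PresentedGroup.mk (bsRels n) z) = FreeGroup.lift ![h, f] z := fun _ => rfl
    have hψmk : ∀ z : FreeGroup (Fin 2),
        ψ (PresentedGroup.mk (bsRels n) z) = FreeGroup.lift ![A, B] z := fun _ => rfl
    intro w
    induction w with
    | H z =>
      rw [hφmk, hψmk]
      clear hφmk hψmk
      induction z using FreeGroup.induction_on with
      | C1 =>
        constructor
        · intro x θ; simp only [map_one]; rfl
        · intro θ; simp only [map_one]; rfl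
      | of i =>
        fin_cases i
        · constructor
          · intro x θ
            show ((FreeGroup.lift ![h, f]) (FreeGroup.of 0) (↑x, θ)).1 = _
            rw [FreeGroup.lift_apply_of]
            show (h (↑x, θ)).1 = ↑((FreeGroup.lift ![A, B]) (FreeGroup.of 0) x)
            rw [FreeGroup.lift_apply_of, hh]
            rfl
          · intro θ
            show ((FreeGroup.lift ![h, f]) (FreeGroup.of 0) (∞, θ)).1 = ∞
            rw [FreeGroup.lift_apply_of]
            show (h (∞, θ)).1 = ∞
            rw [hhinf]
        · constructor
          · intro x θ
            show ((FreeGroup.lift ![h, f]) (FreeGroup.of 1) (↑x, θ)).1 = _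
            rw [FreeGroup.lift_apply_of]
            show (f (↑x, θ)).1 = ↑((FreeGroup.lift ![A, B]) (FreeGroup.of 1) x)
            rw [FreeGroup.lift_apply_of, hf]
            rfl
          · intro θ
            show ((FreeGroup.lift ![h, f]) (FreeGroup.of 1) (∞, θ)).1 = ∞
            rw [FreeGroup.lift_apply_of]
            show (f (∞, θ)).1 = ∞
            rw [hfinf]
      | inv_of i _ =>
        fin_cases i
        · constructor
          · intro x θ
            show ((FreeGroup.lift ![h, f]) (FreeGroup.of 0)⁻¹ (↑x, θ)).1 = _
            rw [map_inv, FreeGroup.lift_apply_of]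
            show (h.symm (↑x, θ)).1 = ↑((FreeGroup.lift ![A, B]) (FreeGroup.of 0)⁻¹ x)
            rw [map_inv, FreeGroup.lift_apply_of, hsymm]
            rfl
          · intro θ
            show ((FreeGroup.lift ![h, f]) (FreeGroup.of 0)⁻¹ (∞, θ)).1 = ∞
            rw [map_inv, FreeGroup.lift_apply_of]
            show (h.symm (∞, θ)).1 = ∞
            rw [hsymminf]
        · constructor
          · intro x θ
            show ((FreeGroup.lift ![h, f]) (FreeGroup.of 1)⁻¹ (↑x, θ)).1 = _
            rw [map_inv, FreeGroup.lift_apply_of]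
            show (f.symm (↑x, θ)).1 = ↑((FreeGroup.lift ![A, B]) (FreeGroup.of 1)⁻¹ x)
            rw [map_inv, FreeGroup.lift_apply_of, fsymm]
            rfl
          · intro θ
            show ((FreeGroup.lift ![h, f]) (FreeGroup.of 1)⁻¹ (∞, θ)).1 = ∞
            rw [map_inv, FreeGroup.lift_apply_of]
            show (f.symm (∞, θ)).1 = ∞
            rw [fsymminf]
      | mul x y hx hy =>
        constructor
        · intro t θ
          rw [map_mul, map_mul, hmul, Equiv.Perm.mul_apply]
          have h1 := hy.1 t θ
          have h2 : (FreeGroup.lift ![h, f]) y (↑t, θ) =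
              (↑((FreeGroup.lift ![A, B]) y t), ((FreeGroup.lift ![h, f]) y (↑t, θ)).2) :=
            Prod.ext h1 rfl
          rw [h2]
          exact hx.1 _ _
        · intro θ
          rw [map_mul, hmul]
          have h1 := hy.2 θ
          have h2 : (FreeGroup.lift ![h, f]) y (∞, θ) =
              (∞, ((FreeGroup.lift ![h, f]) y (∞, θ)).2) := Prod.ext h1 rfl
          rw [h2]
          exact hx.2 _
  -- injectivity
  have hinj : Function.Injective φ := by
    rw [injective_iff_map_eq_one]
    intro w hw
    have hψ1w : ∀ x : ℝ, ψ w x = x := by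
      intro x
      have hc := (compat w).1 x 0
      rw [hw, hone] at hc
      exact (OnePoint.coe_eq_coe.mp hc).symm
    obtain ⟨p, q, m, rfl⟩ := bs_normal_form n w
    have hψw : ψ (((PresentedGroup.of 0 : PresentedGroup (bsRels n)) ^ p)⁻¹ *
        (PresentedGroup.of 1) ^ m * (PresentedGroup.of 0) ^ q) =
        (A ^ p)⁻¹ * B ^ m * A ^ q := by
      rw [map_mul, map_mul, map_inv, map_pow, map_pow, map_zpow, hψ0, hψ1]
    have e0 := hψ1w 0
    rw [hψw] at e0
    rw [Equiv.Perm.mul_apply, Equiv.Perm.mul_apply, hApow, hBzpow, hAinvpow] at e0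
    simp only [mul_zero, zero_add] at e0
    have hm : m = 0 := by
      have hn0' : ((n : ℝ)) ^ p ≠ 0 := pow_ne_zero _ hn0
      field_simp at e0
      simpa using e0
    subst hm
    have e1 := hψ1w 1
    rw [hψw] at e1
    rw [Equiv.Perm.mul_apply, Equiv.Perm.mul_apply, hApow, hBzpow, hAinvpow] at e1
    simp only [mul_one, Int.cast_zero, add_zero] at e1
    have hpq : p = q := by
      have hn0' : ((n : ℝ)) ^ p ≠ 0 := pow_ne_zero _ hn0
      have : ((n : ℝ)) ^ q = (n : ℝ) ^ p := by field_simp at e1; linarith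
      have hnat : n ^ q = n ^ p := by exact_mod_cast this
      exact (Nat.pow_right_injective hn hnat).symm
    subst hpq
    simp
  -- range
  have hrange : φ.range = Subgroup.closure ({f, h} : Set (CylSpace ≃ₜ CylSpace)) := by
    rw [MonoidHom.range_eq_map, ← PresentedGroup.closure_range_of (bsRels n),
      MonoidHom.map_closure]
    congr 1
    rw [← Set.range_comp]
    ext g
    simp only [Set.mem_range, Function.comp_apply, Set.mem_insert_iff, Set.mem_singleton_iff]
    constructor
    · rintro ⟨i, rfl⟩
      fin_cases i
      · right; exact hφ0.symm ▸ rfl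
      · left; exact hφ1.symm ▸ rfl
    · rintro (rfl | rfl)
      · exact ⟨1, hφ1⟩
      · exact ⟨0, hφ0⟩
  exact ⟨part1, φ, hφ0, hφ1, hinj, hrange⟩
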